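/- Let T̂ = [−1,1]² and T a rectangle with affine bijection F(x) = Bx + b mapping T onto T̂, where B is an invertible diagonal 2×2 matrix. Let Ĥ ⊂ H¹(T̂) be a closed subspace on which the H¹-seminorm is a norm, V̂ ⊂ Ĥ finite-dimensional, and φ̂ ∈ L²(T̂). Define the pullback spaces H := {v̂ ∘ F : v̂ ∈ Ĥ}, V := {v̂ ∘ F : v̂ ∈ V̂} and the pushed-forward functional G(v) := ∫_T (φ̂ ∘ F) v. Then ‖G‖_{H'}/‖G‖_{V'} ≤ κ₂(B)² · ‖Ĝ‖_{Ĥ'}/‖Ĝ‖_{V̂'}, where Ĝ(v̂) := ∫_{T̂} φ̂ v̂ and κ₂(B) is the spectral condition number of B. -/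

import Mathlib

open MeasureTheory Set

/-- Squared Euclidean norm of the (strong) gradient of `v` at `x`. -/
noncomputable def gradSq (v : ℝ × ℝ → ℝ) (x : ℝ × ℝ) : ℝ :=
  (fderiv ℝ v x (1, 0)) ^ 2 + (fderiv ℝ v x (0, 1)) ^ 2

/-- The `H¹(S)`-seminorm `|v|_S := ‖∇v‖_{L²(S)}`. -/
noncomputable def sn (S : Set (ℝ × ℝ)) (v : ℝ × ℝ → ℝ) : ℝ :=
  Real.sqrt (∫ x in S, gradSq v x)

lemma sn_zero (S : Set (ℝ × ℝ)) : sn S (fun _ => (0 : ℝ)) = 0 := by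
  have h : ∀ x, gradSq (fun _ => (0 : ℝ)) x = 0 := by
    intro x
    simp [gradSq, fderiv_const]
  simp [sn, h]

lemma map1 {b : ℝ} (c : ℝ) (hb : b ≠ 0) :
    Measure.map (fun x => b * x + c) (volume : Measure ℝ) = ENNReal.ofReal |b|⁻¹ • volume := by
  have h : (fun x : ℝ => b * x + c) = (fun x => x + c) ∘ (fun x => b * x) := rfl
  rw [h, ← Measure.map_map (measurable_add_const c) (measurable_const_mul b),
    Real.map_volume_mul_left hb, Measure.map_smul, map_add_right_eq_self, abs_inv]

lemma smul_prod {α β : Type*} [MeasurableSpace α] [MeasurableSpace β] (c : ENNReal)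
    (μ : Measure α) (ν : Measure β) [SFinite μ] [SFinite ν] :
    (c • μ).prod ν = c • (μ.prod ν) := by
  ext s hs
  rw [Measure.prod_apply hs, Measure.smul_apply, Measure.prod_apply hs, lintegral_smul_measure]

lemma prod_smul {α β : Type*} [MeasurableSpace α] [MeasurableSpace β] (c : ENNReal)
    (μ : Measure α) (ν : Measure β) [SFinite μ] [SFinite ν] :
    μ.prod (c • ν) = c • (μ.prod ν) := by
  ext s hs
  rw [Measure.prod_apply hs, Measure.smul_apply, Measure.prod_apply hs]
  simp only [Measure.smul_apply, smul_eq_mul]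
  rw [lintegral_const_mul _ (measurable_measure_prodMk_left hs)]

lemma map_e {b1 b2 : ℝ} (c1 c2 : ℝ) (hb1 : b1 ≠ 0) (hb2 : b2 ≠ 0) :
    Measure.map (fun p : ℝ × ℝ => (b1 * p.1 + c1, b2 * p.2 + c2)) (volume : Measure (ℝ × ℝ)) =
      ENNReal.ofReal (|b1 * b2|)⁻¹ • volume := by
  have h : (fun p : ℝ × ℝ => (b1 * p.1 + c1, b2 * p.2 + c2)) =
      Prod.map (fun x => b1 * x + c1) (fun x => b2 * x + c2) := rfl
  rw [h, Measure.volume_eq_prod, ← Measure.map_prod_map _ _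
    ((measurable_const_mul b1).add_const c1) ((measurable_const_mul b2).add_const c2),
    map1 c1 hb1, map1 c2 hb2, smul_prod, prod_smul, smul_smul,
    ← ENNReal.ofReal_mul (by positivity), abs_mul, mul_inv, ← Measure.volume_eq_prod]

lemma cov {b1 b2 : ℝ} (c1 c2 : ℝ) (hb1 : b1 ≠ 0) (hb2 : b2 ≠ 0) {S : Set (ℝ × ℝ)}
    (hS : MeasurableSet S) {g : ℝ × ℝ → ℝ}
    (hg : AEStronglyMeasurable g (volume.restrict S)) :
    ∫ x in (fun p : ℝ × ℝ => (b1 * p.1 + c1, b2 * p.2 + c2)) ⁻¹' S,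
        g (b1 * x.1 + c1, b2 * x.2 + c2) = |b1 * b2|⁻¹ * ∫ y in S, g y := by
  set e := fun p : ℝ × ℝ => (b1 * p.1 + c1, b2 * p.2 + c2) with he_def
  have he : Measurable e :=
    (((measurable_const_mul b1).comp measurable_fst).add_const c1).prod
      (((measurable_const_mul b2).comp measurable_snd).add_const c2)
  have hmap : (Measure.map e volume).restrict S = Measure.map e (volume.restrict (e ⁻¹' S)) :=
    Measure.restrict_map he hS
  have hsm : (Measure.map e volume).restrict S =
      ENNReal.ofReal (|b1 * b2|)⁻¹ • (volume.restrict S) := by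
    rw [map_e c1 c2 hb1 hb2, Measure.restrict_smul]
  have h2 : AEStronglyMeasurable g (Measure.map e (volume.restrict (e ⁻¹' S))) := by
    rw [← hmap, hsm]
    exact hg.mono_ac Measure.smul_absolutelyContinuous
  calc ∫ x in e ⁻¹' S, g (e x) = ∫ y, g y ∂(Measure.map e (volume.restrict (e ⁻¹' S))) :=
        (integral_map he.aemeasurable h2).symm
    _ = ∫ y, g y ∂((Measure.map e volume).restrict S) := by rw [hmap]
    _ = |b1 * b2|⁻¹ * ∫ y in S, g y := by
        rw [hsm, integral_smul_measure, ENNReal.toReal_ofReal (by positivity), smul_eq_mul]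

lemma gradSq_comp (b1 b2 c1 c2 : ℝ) {v : ℝ × ℝ → ℝ} (hv : Differentiable ℝ v) (x : ℝ × ℝ) :
    gradSq (fun p => v (b1 * p.1 + c1, b2 * p.2 + c2)) x =
      b1 ^ 2 * (fderiv ℝ v (b1 * x.1 + c1, b2 * x.2 + c2) (1, 0)) ^ 2 +
      b2 ^ 2 * (fderiv ℝ v (b1 * x.1 + c1, b2 * x.2 + c2) (0, 1)) ^ 2 := by
  have h1 : HasFDerivAt (fun p : ℝ × ℝ => b1 * p.1 + c1)
      (b1 • ContinuousLinearMap.fst ℝ ℝ ℝ) x := (hasFDerivAt_fst.const_mul b1).add_const c1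
  have h2 : HasFDerivAt (fun p : ℝ × ℝ => b2 * p.2 + c2)
      (b2 • ContinuousLinearMap.snd ℝ ℝ ℝ) x := (hasFDerivAt_snd.const_mul b2).add_const c2
  have hcomp : HasFDerivAt (fun p : ℝ × ℝ => v (b1 * p.1 + c1, b2 * p.2 + c2))
      ((fderiv ℝ v (b1 * x.1 + c1, b2 * x.2 + c2)).comp
        ((b1 • ContinuousLinearMap.fst ℝ ℝ ℝ).prod (b2 • ContinuousLinearMap.snd ℝ ℝ ℝ))) x :=
    (hv _).hasFDerivAt.comp x (HasFDerivAt.prodMk h1 h2)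
  have hd := hcomp.fderiv
  have e10 : ((b1 • ContinuousLinearMap.fst ℝ ℝ ℝ).prod
      (b2 • ContinuousLinearMap.snd ℝ ℝ ℝ)) (1, 0) = b1 • ((1 : ℝ), (0 : ℝ)) := by
    simp [Prod.ext_iff]
  have e01 : ((b1 • ContinuousLinearMap.fst ℝ ℝ ℝ).prod
      (b2 • ContinuousLinearMap.snd ℝ ℝ ℝ)) (0, 1) = b2 • ((0 : ℝ), (1 : ℝ)) := by
    simp [Prod.ext_iff]
  simp only [gradSq, hd, ContinuousLinearMap.comp_apply, e10, e01,
    ContinuousLinearMap.map_smul, smul_eq_mul]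
  ring

lemma sn_comp {b1 b2 : ℝ} (c1 c2 : ℝ) (hb1 : b1 ≠ 0) (hb2 : b2 ≠ 0) {v : ℝ × ℝ → ℝ}
    (hv : Differentiable ℝ v)
    (hs : sn (Icc (-1 : ℝ) 1 ×ˢ Icc (-1 : ℝ) 1) v ≠ 0) :
    (min |b1| |b2| / Real.sqrt |b1 * b2|) * sn (Icc (-1 : ℝ) 1 ×ˢ Icc (-1 : ℝ) 1) v ≤
      sn ((fun p : ℝ × ℝ => (b1 * p.1 + c1, b2 * p.2 + c2)) ⁻¹'
          (Icc (-1 : ℝ) 1 ×ˢ Icc (-1 : ℝ) 1))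
        (fun x => v (b1 * x.1 + c1, b2 * x.2 + c2)) ∧
    sn ((fun p : ℝ × ℝ => (b1 * p.1 + c1, b2 * p.2 + c2)) ⁻¹'
          (Icc (-1 : ℝ) 1 ×ˢ Icc (-1 : ℝ) 1))
        (fun x => v (b1 * x.1 + c1, b2 * x.2 + c2)) ≤
      (max |b1| |b2| / Real.sqrt |b1 * b2|) * sn (Icc (-1 : ℝ) 1 ×ˢ Icc (-1 : ℝ) 1) v := by
  set Th : Set (ℝ × ℝ) := Icc (-1 : ℝ) 1 ×ˢ Icc (-1 : ℝ) 1 with hTh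
  have hThm : MeasurableSet Th := measurableSet_Icc.prod measurableSet_Icc
  set m := min |b1| |b2| with hm_def
  set M := max |b1| |b2| with hM_def
  set d := |b1 * b2| with hd_def
  have hd : 0 < d := by positivity
  have hm : 0 < m := lt_min (abs_pos.mpr hb1) (abs_pos.mpr hb2)
  have hM : 0 < M := lt_of_lt_of_le hm (min_le_max)
  have hm1 : m ≤ |b1| := min_le_left _ _
  have hm2 : m ≤ |b2| := min_le_right _ _
  have hM1 : |b1| ≤ M := le_max_left _ _
  have hM2 : |b2| ≤ M := le_max_right _ _
  set I := ∫ y in Th, gradSq v y with hI_def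
  have hI0 : 0 < I := by
    have := hs
    rw [sn] at this
    exact Real.sqrt_ne_zero'.mp this
  have hInt : IntegrableOn (gradSq v) Th := by
    by_contra h
    rw [hI_def] at hI0
    rw [integral_undef h] at hI0
    exact lt_irrefl _ hI0
  set w : ℝ × ℝ → ℝ := fun y =>
    b1 ^ 2 * (fderiv ℝ v y (1, 0)) ^ 2 + b2 ^ 2 * (fderiv ℝ v y (0, 1)) ^ 2 with hw_def
  have hw_meas : Measurable w := by
    apply Measurable.add
    · exact (((measurable_fderiv_apply_const ℝ v _).pow_const 2).const_mul _)
    · exact (((measurable_fderiv_apply_const ℝ v _).pow_const 2).const_mul _)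
  have hb1sq : b1 ^ 2 = |b1| ^ 2 := (sq_abs b1).symm
  have hb2sq : b2 ^ 2 = |b2| ^ 2 := (sq_abs b2).symm
  have hw_le : ∀ y, w y ≤ M ^ 2 * gradSq v y := by
    intro y
    have h1 : b1 ^ 2 ≤ M ^ 2 := by rw [hb1sq]; exact pow_le_pow_left₀ (abs_nonneg b1) hM1 2
    have h2 : b2 ^ 2 ≤ M ^ 2 := by rw [hb2sq]; exact pow_le_pow_left₀ (abs_nonneg b2) hM2 2
    show b1 ^ 2 * (fderiv ℝ v y (1, 0)) ^ 2 + b2 ^ 2 * (fderiv ℝ v y (0, 1)) ^ 2 ≤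
      M ^ 2 * ((fderiv ℝ v y (1, 0)) ^ 2 + (fderiv ℝ v y (0, 1)) ^ 2)
    nlinarith [sq_nonneg (fderiv ℝ v y (1, 0)), sq_nonneg (fderiv ℝ v y (0, 1))]
  have hw_ge : ∀ y, m ^ 2 * gradSq v y ≤ w y := by
    intro y
    have h1 : m ^ 2 ≤ b1 ^ 2 := by rw [hb1sq]; exact pow_le_pow_left₀ hm.le hm1 2
    have h2 : m ^ 2 ≤ b2 ^ 2 := by rw [hb2sq]; exact pow_le_pow_left₀ hm.le hm2 2
    show m ^ 2 * ((fderiv ℝ v y (1, 0)) ^ 2 + (fderiv ℝ v y (0, 1)) ^ 2) ≤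
      b1 ^ 2 * (fderiv ℝ v y (1, 0)) ^ 2 + b2 ^ 2 * (fderiv ℝ v y (0, 1)) ^ 2
    nlinarith [sq_nonneg (fderiv ℝ v y (1, 0)), sq_nonneg (fderiv ℝ v y (0, 1))]
  have hwInt : IntegrableOn w Th := by
    refine (hInt.const_mul (M ^ 2)).mono' hw_meas.aestronglyMeasurable ?_
    filter_upwards with y
    rw [Real.norm_eq_abs, abs_of_nonneg (by positivity)]
    exact hw_le y
  have hup : ∫ y in Th, w y ≤ M ^ 2 * I := by
    rw [hI_def, ← integral_const_mul]
    exact setIntegral_mono_on hwInt (hInt.const_mul _) hThm (fun y _ => hw_le y)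
  have hlo : m ^ 2 * I ≤ ∫ y in Th, w y := by
    rw [hI_def, ← integral_const_mul]
    exact setIntegral_mono_on (hInt.const_mul _) hwInt hThm (fun y _ => hw_ge y)
  have hw0 : 0 ≤ ∫ y in Th, w y := setIntegral_nonneg hThm (fun y _ => by positivity)
  have hcov : (∫ x in (fun p : ℝ × ℝ => (b1 * p.1 + c1, b2 * p.2 + c2)) ⁻¹' Th,
      gradSq (fun p => v (b1 * p.1 + c1, b2 * p.2 + c2)) x) = d⁻¹ * ∫ y in Th, w y := by
    simp_rw [gradSq_comp b1 b2 c1 c2 hv]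
    exact cov c1 c2 hb1 hb2 hThm hw_meas.aestronglyMeasurable.restrict
  have hs' : sn ((fun p : ℝ × ℝ => (b1 * p.1 + c1, b2 * p.2 + c2)) ⁻¹' Th)
      (fun x => v (b1 * x.1 + c1, b2 * x.2 + c2)) = Real.sqrt (d⁻¹ * ∫ y in Th, w y) := by
    rw [sn, hcov]
  have hsq : ∀ r : ℝ, 0 < r → Real.sqrt (d⁻¹ * (r ^ 2 * I)) = (r / Real.sqrt d) * Real.sqrt I := by
    intro r hr
    rw [show d⁻¹ * (r ^ 2 * I) = (r / Real.sqrt d) ^ 2 * I by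
        rw [div_pow, Real.sq_sqrt hd.le]; ring,
      Real.sqrt_mul (sq_nonneg _), Real.sqrt_sq (by positivity)]
  have hsnv : sn Th v = Real.sqrt I := rfl
  constructor
  · rw [hs', hsnv, ← hsq m hm]
    exact Real.sqrt_le_sqrt (by nlinarith [inv_nonneg.mpr hd.le])
  · rw [hs', hsnv, ← hsq M hM]
    exact Real.sqrt_le_sqrt (by nlinarith [inv_nonneg.mpr hd.le])

lemma key_est {b1 b2 : ℝ} (c1 c2 : ℝ) (hb1 : b1 ≠ 0) (hb2 : b2 ≠ 0)
    {u : ℝ × ℝ → ℝ} (hud : Differentiable ℝ u)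
    {φh : ℝ × ℝ → ℝ}
    (hφ : MemLp φh 2 (volume.restrict (Icc (-1 : ℝ) 1 ×ˢ Icc (-1 : ℝ) 1)))
    (hsu : sn (Icc (-1 : ℝ) 1 ×ˢ Icc (-1 : ℝ) 1) u ≠ 0) :
    sn ((fun p : ℝ × ℝ => (b1 * p.1 + c1, b2 * p.2 + c2)) ⁻¹'
        (Icc (-1 : ℝ) 1 ×ˢ Icc (-1 : ℝ) 1)) (fun x => u (b1 * x.1 + c1, b2 * x.2 + c2)) ≠ 0 ∧
    |∫ x in (fun p : ℝ × ℝ => (b1 * p.1 + c1, b2 * p.2 + c2)) ⁻¹'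
          (Icc (-1 : ℝ) 1 ×ˢ Icc (-1 : ℝ) 1),
        φh (b1 * x.1 + c1, b2 * x.2 + c2) * u (b1 * x.1 + c1, b2 * x.2 + c2)| /
      sn ((fun p : ℝ × ℝ => (b1 * p.1 + c1, b2 * p.2 + c2)) ⁻¹'
          (Icc (-1 : ℝ) 1 ×ˢ Icc (-1 : ℝ) 1)) (fun x => u (b1 * x.1 + c1, b2 * x.2 + c2)) ≤
      (Real.sqrt |b1 * b2| * min |b1| |b2|)⁻¹ *
        (|∫ y in Icc (-1 : ℝ) 1 ×ˢ Icc (-1 : ℝ) 1, φh y * u y| /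
          sn (Icc (-1 : ℝ) 1 ×ˢ Icc (-1 : ℝ) 1) u) ∧
    |∫ y in Icc (-1 : ℝ) 1 ×ˢ Icc (-1 : ℝ) 1, φh y * u y| /
        sn (Icc (-1 : ℝ) 1 ×ˢ Icc (-1 : ℝ) 1) u ≤
      (Real.sqrt |b1 * b2| * max |b1| |b2|) *
        (|∫ x in (fun p : ℝ × ℝ => (b1 * p.1 + c1, b2 * p.2 + c2)) ⁻¹'
              (Icc (-1 : ℝ) 1 ×ˢ Icc (-1 : ℝ) 1),
            φh (b1 * x.1 + c1, b2 * x.2 + c2) * u (b1 * x.1 + c1, b2 * x.2 + c2)| /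
          sn ((fun p : ℝ × ℝ => (b1 * p.1 + c1, b2 * p.2 + c2)) ⁻¹'
              (Icc (-1 : ℝ) 1 ×ˢ Icc (-1 : ℝ) 1))
            (fun x => u (b1 * x.1 + c1, b2 * x.2 + c2))) := by
  set Th : Set (ℝ × ℝ) := Icc (-1 : ℝ) 1 ×ˢ Icc (-1 : ℝ) 1 with hTh_def
  have hThm : MeasurableSet Th := measurableSet_Icc.prod measurableSet_Icc
  set m := min |b1| |b2| with hm_def
  set M := max |b1| |b2| with hM_def
  have hm : 0 < m := lt_min (abs_pos.mpr hb1) (abs_pos.mpr hb2)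
  have hM : 0 < M := lt_of_lt_of_le hm min_le_max
  have hd : (0 : ℝ) < |b1 * b2| := by positivity
  set sd := Real.sqrt |b1 * b2| with hsd_def
  have hsd : 0 < sd := Real.sqrt_pos.mpr hd
  have hsd2 : sd * sd = |b1 * b2| := Real.mul_self_sqrt hd.le
  obtain ⟨hlow, hupp⟩ := sn_comp c1 c2 hb1 hb2 hud hsu
  set s := sn Th u with hs_def
  set s' := sn ((fun p : ℝ × ℝ => (b1 * p.1 + c1, b2 * p.2 + c2)) ⁻¹' Th)
    (fun x => u (b1 * x.1 + c1, b2 * x.2 + c2)) with hs'_def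
  have hs : 0 < s := lt_of_le_of_ne (Real.sqrt_nonneg _) (Ne.symm hsu)
  have hs' : 0 < s' := lt_of_lt_of_le (by positivity) hlow
  have hG : (∫ x in (fun p : ℝ × ℝ => (b1 * p.1 + c1, b2 * p.2 + c2)) ⁻¹' Th,
      φh (b1 * x.1 + c1, b2 * x.2 + c2) * u (b1 * x.1 + c1, b2 * x.2 + c2)) =
      |b1 * b2|⁻¹ * ∫ y in Th, φh y * u y :=
    cov c1 c2 hb1 hb2 hThm
      (hφ.aestronglyMeasurable.mul hud.continuous.aestronglyMeasurable.restrict)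
  set J := |∫ y in Th, φh y * u y| with hJ_def
  have hGabs : |∫ x in (fun p : ℝ × ℝ => (b1 * p.1 + c1, b2 * p.2 + c2)) ⁻¹' Th,
      φh (b1 * x.1 + c1, b2 * x.2 + c2) * u (b1 * x.1 + c1, b2 * x.2 + c2)| =
      |b1 * b2|⁻¹ * J := by
    rw [hG, abs_mul, abs_of_pos (inv_pos.mpr hd)]
  have hJ0 : 0 ≤ J := abs_nonneg _
  refine ⟨ne_of_gt hs', ?_, ?_⟩
  · rw [hGabs]
    calc |b1 * b2|⁻¹ * J / s' ≤ |b1 * b2|⁻¹ * J / (m / sd * s) :=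
          div_le_div_of_nonneg_left (by positivity) (by positivity) hlow
      _ = (sd * m)⁻¹ * (J / s) := by
          rw [← hsd2]
          field_simp
  · rw [hGabs]
    calc J / s = (sd * M) * (|b1 * b2|⁻¹ * J / (M / sd * s)) := by
          rw [← hsd2]
          field_simp
      _ ≤ (sd * M) * (|b1 * b2|⁻¹ * J / s') := by
          refine mul_le_mul_of_nonneg_left ?_ (by positivity)
          exact div_le_div_of_nonneg_left (by positivity) hs' hupp

lemma sn_nonneg (S : Set (ℝ × ℝ)) (v : ℝ × ℝ → ℝ) : 0 ≤ sn S v := Real.sqrt_nonneg _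

lemma ratio_le {IH' IH IV' IV : Sort*}
    (fH' : IH' → ℝ) (fH : IH → ℝ) (fV' : IV' → ℝ) (fV : IV → ℝ)
    (hfH'0 : ∀ i, 0 ≤ fH' i) (hfH0 : ∀ i, 0 ≤ fH i)
    (hfV'0 : ∀ i, 0 ≤ fV' i) (hfV0 : ∀ i, 0 ≤ fV i)
    {c K : ℝ} (hc : 0 < c) (hK : 0 < K) (hcK : 1 ≤ c * K)
    (hH1 : ∀ i : IH', ∃ j, fH' i ≤ c * fH j)
    (hH2 : ∀ j : IH, ∃ i, fH j ≤ K * fH' i)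
    (hV1 : ∀ i : IV', ∃ j, fV' i ≤ c * fV j)
    (hV2 : ∀ j : IV, ∃ i, fV j ≤ K * fV' i) :
    (⨆ i, fH' i) / (⨆ i, fV' i) ≤ (c * K) ^ 2 * ((⨆ i, fH i) / (⨆ i, fV i)) := by
  have hRHS : 0 ≤ (c * K) ^ 2 * ((⨆ i, fH i) / (⨆ i, fV i)) :=
    mul_nonneg (sq_nonneg _)
      (div_nonneg (Real.iSup_nonneg hfH0) (Real.iSup_nonneg hfV0))
  rcases le_or_gt (⨆ i, fH' i) 0 with hA' | hA'
  · rw [le_antisymm hA' (Real.iSup_nonneg hfH'0), zero_div]; exact hRHS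
  rcases le_or_gt (⨆ i, fV' i) 0 with ha' | ha'
  · rw [le_antisymm ha' (Real.iSup_nonneg hfV'0), div_zero]; exact hRHS
  have hbH' : BddAbove (range fH') := by
    by_contra h
    rw [Real.iSup_of_not_bddAbove h] at hA'
    exact lt_irrefl _ hA'
  have hbV' : BddAbove (range fV') := by
    by_contra h
    rw [Real.iSup_of_not_bddAbove h] at ha'
    exact lt_irrefl _ ha'
  have hneV' : Nonempty IV' := by
    by_contra h
    rw [not_nonempty_iff] at h
    rw [iSup, range_eq_empty, Real.sSup_empty] at ha'
    exact lt_irrefl _ ha'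
  have hbH : BddAbove (range fH) := by
    refine ⟨K * (⨆ i, fH' i), ?_⟩
    rintro _ ⟨j, rfl⟩
    obtain ⟨i, hi⟩ := hH2 j
    exact hi.trans (mul_le_mul_of_nonneg_left (le_ciSup hbH' i) hK.le)
  have hbV : BddAbove (range fV) := by
    refine ⟨K * (⨆ i, fV' i), ?_⟩
    rintro _ ⟨j, rfl⟩
    obtain ⟨i, hi⟩ := hV2 j
    exact hi.trans (mul_le_mul_of_nonneg_left (le_ciSup hbV' i) hK.le)
  obtain ⟨i0, hi0⟩ : ∃ i, 0 < fV' i := (lt_ciSup_iff hbV').mp ha'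
  obtain ⟨j0, hj0⟩ := hV1 i0
  have hfVj0 : 0 < fV j0 := by nlinarith [hfV0 j0]
  have ha : 0 < ⨆ j, fV j := lt_of_lt_of_le hfVj0 (le_ciSup hbV j0)
  have h1 : (⨆ i, fH' i) ≤ c * ⨆ j, fH j := by
    refine Real.iSup_le (fun i => ?_) (mul_nonneg hc.le (Real.iSup_nonneg hfH0))
    obtain ⟨j, hj⟩ := hH1 i
    exact hj.trans (mul_le_mul_of_nonneg_left (le_ciSup hbH j) hc.le)
  have h2 : (⨆ j, fV j) ≤ K * ⨆ i, fV' i := by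
    refine Real.iSup_le (fun j => ?_) (mul_nonneg hK.le (Real.iSup_nonneg hfV'0))
    obtain ⟨i, hi⟩ := hV2 j
    exact hi.trans (mul_le_mul_of_nonneg_left (le_ciSup hbV' i) hK.le)
  have hA0 : 0 ≤ ⨆ j, fH j := Real.iSup_nonneg hfH0
  calc (⨆ i, fH' i) / (⨆ i, fV' i) ≤ (c * ⨆ j, fH j) / (⨆ i, fV' i) :=
        (div_le_div_iff_of_pos_right ha').mpr h1
    _ ≤ (c * ⨆ j, fH j) * (K / (⨆ j, fV j)) := by
        rw [div_eq_mul_inv]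
        refine mul_le_mul_of_nonneg_left ?_ (mul_nonneg hc.le hA0)
        rw [inv_eq_one_div]
        exact (div_le_div_iff₀ ha' ha).mpr (by linarith)
    _ = (c * K) * ((⨆ j, fH j) / (⨆ j, fV j)) := by ring
    _ ≤ (c * K) ^ 2 * ((⨆ j, fH j) / (⨆ j, fV j)) := by
        have : 0 ≤ (⨆ j, fH j) / (⨆ j, fV j) := div_nonneg hA0 (Real.iSup_nonneg hfV0)
        nlinarith

/-- Saturation extends from the reference square to rectangles: let `F(x) = Bx + b` with
`B = diag(b₁,b₂)` invertible map the rectangle `T` onto `T̂ = [−1,1]²`, let `V̂ ⊆ Ĥ` be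
subspaces of `H¹(T̂)` (with `V̂` finite dimensional and the `H¹(T̂)`-seminorm a norm on `Ĥ`),
and let `φ̂ ∈ L²(T̂)`.  With `Ĝ(v̂) := ∫_{T̂} φ̂ v̂` and the pulled-back functional
`G(v̂∘F) := ∫_T (φ̂∘F)(v̂∘F)`, the dual-norm ratio over the pullback spaces is bounded by
`κ₂(B)²` times the ratio over `Ĥ, V̂`, where `κ₂(B) = max(|b₁|,|b₂|)/min(|b₁|,|b₂|)`. -/
theorem saturation_pullback (b1 b2 c1 c2 : ℝ) (hb1 : b1 ≠ 0) (hb2 : b2 ≠ 0)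
    (T : Set (ℝ × ℝ))
    (hT : T = (fun p : ℝ × ℝ => (b1 * p.1 + c1, b2 * p.2 + c2)) ⁻¹'
        (Icc (-1 : ℝ) 1 ×ˢ Icc (-1 : ℝ) 1))
    (Hh Vh : Submodule ℝ ((ℝ × ℝ) → ℝ)) (hVH : Vh ≤ Hh) [FiniteDimensional ℝ Vh]
    (hdiff : ∀ v ∈ Hh, Differentiable ℝ v)
    (hnorm : ∀ v ∈ Hh, sn (Icc (-1 : ℝ) 1 ×ˢ Icc (-1 : ℝ) 1) v = 0 → v = 0)
    (φh : ℝ × ℝ → ℝ) (hφ : MemLp φh 2 (volume.restrict (Icc (-1 : ℝ) 1 ×ˢ Icc (-1 : ℝ) 1))) :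
    (⨆ v : {v : Hh // sn T (fun x => (v : (ℝ × ℝ) → ℝ) (b1 * x.1 + c1, b2 * x.2 + c2)) ≠ 0},
        |∫ x in T, φh (b1 * x.1 + c1, b2 * x.2 + c2) *
            ((v : Hh) : (ℝ × ℝ) → ℝ) (b1 * x.1 + c1, b2 * x.2 + c2)| /
          sn T (fun x => ((v : Hh) : (ℝ × ℝ) → ℝ) (b1 * x.1 + c1, b2 * x.2 + c2))) /
    (⨆ v : {v : Vh // sn T (fun x => (v : (ℝ × ℝ) → ℝ) (b1 * x.1 + c1, b2 * x.2 + c2)) ≠ 0},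
        |∫ x in T, φh (b1 * x.1 + c1, b2 * x.2 + c2) *
            ((v : Vh) : (ℝ × ℝ) → ℝ) (b1 * x.1 + c1, b2 * x.2 + c2)| /
          sn T (fun x => ((v : Vh) : (ℝ × ℝ) → ℝ) (b1 * x.1 + c1, b2 * x.2 + c2))) ≤
    (max |b1| |b2| / min |b1| |b2|) ^ 2 *
      ((⨆ v : {v : Hh // sn (Icc (-1 : ℝ) 1 ×ˢ Icc (-1 : ℝ) 1) (v : (ℝ × ℝ) → ℝ) ≠ 0},
          |∫ x in Icc (-1 : ℝ) 1 ×ˢ Icc (-1 : ℝ) 1, φh x * ((v : Hh) : (ℝ × ℝ) → ℝ) x| /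
            sn (Icc (-1 : ℝ) 1 ×ˢ Icc (-1 : ℝ) 1) ((v : Hh) : (ℝ × ℝ) → ℝ)) /
        (⨆ v : {v : Vh // sn (Icc (-1 : ℝ) 1 ×ˢ Icc (-1 : ℝ) 1) (v : (ℝ × ℝ) → ℝ) ≠ 0},
          |∫ x in Icc (-1 : ℝ) 1 ×ˢ Icc (-1 : ℝ) 1, φh x * ((v : Vh) : (ℝ × ℝ) → ℝ) x| /
            sn (Icc (-1 : ℝ) 1 ×ˢ Icc (-1 : ℝ) 1) ((v : Vh) : (ℝ × ℝ) → ℝ))) := by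

  subst hT
  have hm : 0 < min |b1| |b2| := lt_min (abs_pos.mpr hb1) (abs_pos.mpr hb2)
  have hM : 0 < max |b1| |b2| := lt_of_lt_of_le hm min_le_max
  have hd : (0 : ℝ) < |b1 * b2| := by positivity
  have hsd : 0 < Real.sqrt |b1 * b2| := Real.sqrt_pos.mpr hd
  have hcoef : max |b1| |b2| / min |b1| |b2| =
      (Real.sqrt |b1 * b2| * min |b1| |b2|)⁻¹ * (Real.sqrt |b1 * b2| * max |b1| |b2|) := by
    field_simp
  rw [hcoef]
  have hzero : ∀ u : (ℝ × ℝ) → ℝ, u ∈ Hh →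
      sn ((fun p : ℝ × ℝ => (b1 * p.1 + c1, b2 * p.2 + c2)) ⁻¹'
          (Icc (-1 : ℝ) 1 ×ˢ Icc (-1 : ℝ) 1))
        (fun x => u (b1 * x.1 + c1, b2 * x.2 + c2)) ≠ 0 →
      sn (Icc (-1 : ℝ) 1 ×ˢ Icc (-1 : ℝ) 1) u ≠ 0 := by
    intro u hu h hc0
    apply h
    have h0 : u = 0 := hnorm u hu hc0
    have heq : (fun x : ℝ × ℝ => u (b1 * x.1 + c1, b2 * x.2 + c2)) = fun _ => (0 : ℝ) := by
      funext x; rw [h0]; rfl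
    rw [heq, sn_zero]
  apply ratio_le
  · exact fun i => div_nonneg (abs_nonneg _) (sn_nonneg _ _)
  · exact fun i => div_nonneg (abs_nonneg _) (sn_nonneg _ _)
  · exact fun i => div_nonneg (abs_nonneg _) (sn_nonneg _ _)
  · exact fun i => div_nonneg (abs_nonneg _) (sn_nonneg _ _)
  · positivity
  · positivity
  · rw [← hcoef]
    exact (one_le_div hm).mpr min_le_max
  · intro i
    have hmem : ((i : Hh) : (ℝ × ℝ) → ℝ) ∈ Hh := (i : Hh).2
    have hsu := hzero _ hmem i.2
    exact ⟨⟨(i : Hh), hsu⟩, (key_est c1 c2 hb1 hb2 (hdiff _ hmem) hφ hsu).2.1⟩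
  · intro j
    have hmem : ((j : Hh) : (ℝ × ℝ) → ℝ) ∈ Hh := (j : Hh).2
    exact ⟨⟨(j : Hh), (key_est c1 c2 hb1 hb2 (hdiff _ hmem) hφ j.2).1⟩,
      (key_est c1 c2 hb1 hb2 (hdiff _ hmem) hφ j.2).2.2⟩
  · intro i
    have hmem : ((i : Vh) : (ℝ × ℝ) → ℝ) ∈ Hh := hVH (i : Vh).2
    have hsu := hzero _ hmem i.2
    exact ⟨⟨(i : Vh), hsu⟩, (key_est c1 c2 hb1 hb2 (hdiff _ hmem) hφ hsu).2.1⟩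
  · intro j
    have hmem : ((j : Vh) : (ℝ × ℝ) → ℝ) ∈ Hh := hVH (j : Vh).2
    exact ⟨⟨(j : Vh), (key_est c1 c2 hb1 hb2 (hdiff _ hmem) hφ j.2).1⟩,
      (key_est c1 c2 hb1 hb2 (hdiff _ hmem) hφ j.2).2.2⟩
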